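/- Let Γ be a crystallographic group of dimension n, viewed as a subgroup of Aff(n), and let F ∈ Aff(n) be such that for all x, y ∈ ℝⁿ one has Γ·x = Γ·y if and only if Γ·F(x) = Γ·F(y) (so that F descends to a well-defined bijection of the orbit space ℝⁿ/Γ). Then F normalizes Γ, i.e. FΓF⁻¹ = Γ. -/

import Mathlib

/-- Euclidean `n`-space. -/
abbrev E (n : ℕ) := EuclideanSpace ℝ (Fin n)

/-- `AffE n` is the group of invertible affine transformations of Euclidean `n`-space. -/
abbrev AffE (n : ℕ) := E n ≃ᵃ[ℝ] E n

/-- We topologize `Aff(n)` via the topology of pointwise convergence (for affine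
transformations this coincides with the compact-open and the norm topologies). -/
noncomputable instance affTop (n : ℕ) : TopologicalSpace (AffE n) :=
  TopologicalSpace.induced (fun α => (⇑α : E n → E n)) inferInstance

/-- The orbit equivalence relation on `ℝⁿ` induced by a subgroup `Γ ≤ Aff(n)`;
its quotient is the orbit space `ℝⁿ/Γ`. -/
def orbitSetoid (n : ℕ) (Γ : Subgroup (AffE n)) : Setoid (E n) where
  r x y := ∃ γ ∈ Γ, γ x = y
  iseqv := by
    constructor
    · exact fun x => ⟨1, Γ.one_mem, rfl⟩
    · rintro x y ⟨γ, hγ, rfl⟩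
      exact ⟨γ⁻¹, Γ.inv_mem hγ, by rw [AffineEquiv.inv_def, AffineEquiv.symm_apply_apply]⟩
    · rintro x y z ⟨γ, hγ, rfl⟩ ⟨δ, hδ, rfl⟩
      exact ⟨δ * γ, Γ.mul_mem hδ hγ, rfl⟩

lemma aff_eval_eq (n : ℕ) (b : AffineBasis (Fin (n+1)) ℝ (E n)) (α : AffE n) (x : E n) :
    α x = ∑ i, b.coord i x • α (b i) := by
  have h := Finset.map_affineCombination Finset.univ (⇑b) (fun i => b.coord i x)
    (b.sum_coord_apply_eq_one x) α.toAffineMap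
  rw [b.affineCombination_coord_eq_self x,
    Finset.univ.affineCombination_eq_linear_combination _ _ (b.sum_coord_apply_eq_one x)] at h
  simpa using h

lemma affSecondCountable (n : ℕ) : SecondCountableTopology (AffE n) := by
  obtain ⟨b⟩ : Nonempty (AffineBasis (Fin (n+1)) ℝ (E n)) :=
    AffineBasis.exists_affineBasis_of_finiteDimensional (by simp)
  set Φ : AffE n → (Fin (n+1) → E n) := fun α i => α (b i) with hΦ
  have key : affTop n = TopologicalSpace.induced Φ inferInstance := by
    refine le_antisymm ?_ ?_
    · rw [← continuous_iff_le_induced]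
      exact continuous_pi fun i => (continuous_apply (b i)).comp continuous_induced_dom
    · have hc : @Continuous _ _ (TopologicalSpace.induced Φ inferInstance) _
          (fun α : AffE n => (⇑α : E n → E n)) := by
        refine @continuous_pi (AffE n) (E n) (fun _ => E n)
          (TopologicalSpace.induced Φ inferInstance) _ _ fun x => ?_
        have he : (fun α : AffE n => α x) = fun α => ∑ i, b.coord i x • Φ α i := by
          funext α; exact aff_eval_eq n b α x
        rw [he]
        have hout : Continuous (fun v : Fin (n+1) → E n => ∑ i, b.coord i x • v i) := by
          fun_prop
        exact @Continuous.comp (AffE n) (Fin (n+1) → E n) (E n)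
          (TopologicalSpace.induced Φ inferInstance) _ _ _ _ hout continuous_induced_dom
      exact continuous_iff_le_induced.mp hc
  have h2 : @SecondCountableTopology (AffE n) (TopologicalSpace.induced Φ inferInstance) :=
    TopologicalSpace.secondCountableTopology_induced _ _ Φ
  rwa [← key] at h2

lemma gamma_countable (n : ℕ) (Γ : Subgroup (AffE n)) (hdisc : DiscreteTopology ↥Γ) :
    Countable ↥Γ := by
  have h1 : SecondCountableTopology (AffE n) := affSecondCountable n
  have h2 : SecondCountableTopology ↥Γ :=
    TopologicalSpace.secondCountableTopology_induced ↥Γ (AffE n) ((↑) : ↥Γ → AffE n)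
  exact TopologicalSpace.separableSpace_iff_countable.mp inferInstance

lemma conj_mem (n : ℕ) (Γ : Subgroup (AffE n)) (hdisc : DiscreteTopology ↥Γ)
    (F : AffE n)
    (hF : ∀ x y : E n, (∃ γ ∈ Γ, γ x = y) ↔ (∃ γ ∈ Γ, γ (F x) = F y))
    {γ : AffE n} (hγ : γ ∈ Γ) : F * γ * F⁻¹ ∈ Γ := by
  have hcnt : Countable ↥Γ := gamma_countable n Γ hdisc
  set g : AffE n := F * γ * F⁻¹ with hg
  have hgapp : ∀ x, g x = F (γ (F.symm x)) := by
    intro x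
    rw [hg, AffineEquiv.inv_def]
    rfl
  have horb : ∀ x : E n, ∃ δ : ↥Γ, (δ : AffE n) x = g x := by
    intro x
    obtain ⟨δ, hδ, hδx⟩ := (hF (F.symm x) (γ (F.symm x))).mp ⟨γ, hγ, rfl⟩
    refine ⟨⟨δ, hδ⟩, ?_⟩
    rw [hgapp, ← hδx, F.apply_symm_apply]
  have hclosed : ∀ δ : ↥Γ, IsClosed {x : E n | g x = (δ : AffE n) x} :=
    fun δ => isClosed_eq g.toAffineMap.continuous_of_finiteDimensional
      (δ : AffE n).toAffineMap.continuous_of_finiteDimensional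
  have hcover : (⋃ δ : ↥Γ, {x : E n | g x = (δ : AffE n) x}) = Set.univ := by
    ext x
    simp only [Set.mem_iUnion, Set.mem_univ, iff_true, Set.mem_setOf_eq]
    obtain ⟨δ, hδ⟩ := horb x
    exact ⟨δ, hδ.symm⟩
  obtain ⟨δ, x₀, hx₀⟩ := nonempty_interior_of_iUnion_of_closed hclosed hcover
  have hx0mem' : x₀ ∈ {x : E n | g x = (δ : AffE n) x} := interior_subset hx₀
  have hx0mem : g x₀ = (δ : AffE n) x₀ := hx0mem'
  obtain ⟨ε, hε, hball⟩ := Metric.isOpen_iff.mp isOpen_interior x₀ hx₀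
  have hlin : ∀ v : E n, g.linear v = (δ : AffE n).linear v := by
    intro v
    set t : ℝ := ε / (2 * (‖v‖ + 1)) with ht
    have htpos : 0 < t := by positivity
    have hmem : t • v +ᵥ x₀ ∈ Metric.ball x₀ ε := by
      rw [Metric.mem_ball, dist_vadd_left, norm_smul, Real.norm_eq_abs, abs_of_pos htpos]
      have hv : 0 ≤ ‖v‖ := norm_nonneg v
      have h1 : t * ‖v‖ < t * (‖v‖ + 1) := by nlinarith
      have h2 : t * (‖v‖ + 1) = ε / 2 := by
        rw [ht]; field_simp
      nlinarith
    have heq' : t • v +ᵥ x₀ ∈ {x : E n | g x = (δ : AffE n) x} :=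
      interior_subset (hball hmem)
    have heq : g (t • v +ᵥ x₀) = (δ : AffE n) (t • v +ᵥ x₀) := heq'
    rw [AffineEquiv.map_vadd, AffineEquiv.map_vadd, hx0mem] at heq
    have h3 : g.linear (t • v) = (δ : AffE n).linear (t • v) := vadd_right_cancel _ heq
    rw [map_smul, map_smul] at h3
    exact smul_right_injective (E n) (ne_of_gt htpos) h3
  have hgd : g = (δ : AffE n) := by
    apply AffineEquiv.ext
    intro x
    have hx : x = (x -ᵥ x₀) +ᵥ x₀ := (vsub_vadd x x₀).symm
    rw [hx, AffineEquiv.map_vadd, AffineEquiv.map_vadd, hx0mem, hlin]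
  rw [hgd]
  exact δ.2

/-- Let `Γ` be a crystallographic group of dimension `n` (a discrete
subgroup of `Aff(n)` consisting of isometries, with compact orbit space `ℝⁿ/Γ`), and let
`F ∈ Aff(n)` be such that for all `x, y` one has `Γ·x = Γ·y` iff `Γ·F(x) = Γ·F(y)` (so `F`
descends to a bijection of `ℝⁿ/Γ`).  Then `F` normalizes `Γ`, i.e. `FΓF⁻¹ = Γ`. -/
theorem stmt3 (n : ℕ) (Γ : Subgroup (AffE n))
    (hiso : ∀ γ : AffE n, γ ∈ Γ → Isometry (⇑γ : E n → E n))
    (hdisc : DiscreteTopology ↥Γ)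
    (hcpt : CompactSpace (Quotient (orbitSetoid n Γ)))
    (F : AffE n)
    (hF : ∀ x y : E n, (∃ γ ∈ Γ, γ x = y) ↔ (∃ γ ∈ Γ, γ (F x) = F y)) :
    F ∈ Subgroup.normalizer (Γ : Set (AffE n)) := by

  have hF' : ∀ x y : E n, (∃ γ ∈ Γ, γ x = y) ↔ (∃ γ ∈ Γ, γ (F⁻¹ x) = F⁻¹ y) := by
    intro x y
    have := (hF (F⁻¹ x) (F⁻¹ y)).symm
    rwa [show F (F⁻¹ x) = x from F.apply_symm_apply x,
      show F (F⁻¹ y) = y from F.apply_symm_apply y] at this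
  rw [Subgroup.mem_normalizer_iff]
  intro h
  constructor
  · exact fun hh => conj_mem n Γ hdisc F hF hh
  · intro hh
    have := conj_mem n Γ hdisc F⁻¹ hF' hh
    simpa [mul_assoc] using this
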